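/- For every integer N ≥ 0 there exist rational numbers a_N and b_N such that ∫_0^1 ∫_0^1 ( x·y·(1−x)·(1−y) / (1−x·y) )^N · (1/(1−x·y)) dx dy = a_N + b_N·ζ(2), the integral converging absolutely. (These are the basic cellular integrals for n = 5 and σ = (1,3,5,2,4), which reproduce the linear forms in 1 and ζ(2) from Apéry's irrationality proof of ζ(2).) -/

import Mathlib

open MeasureTheory Filter Finset

noncomputable def zeta2 : ℝ := ∑' k : ℕ, 1 / ((k : ℝ) + 1) ^ 2

/-- partial harmonic sums -/
noncomputable def Hs (K : ℕ) : ℝ := ∑ k ∈ Finset.range K, 1 / ((k : ℝ) + 1)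
/-- partial zeta sums -/
noncomputable def Zs (K : ℕ) : ℝ := ∑ k ∈ Finset.range K, 1 / ((k : ℝ) + 1) ^ 2

lemma summable_one_div_sq : Summable (fun k : ℕ => 1 / ((k : ℝ) + 1) ^ 2) := by
  have := Real.summable_one_div_nat_pow.2 (le_refl 2)
  have h2 := (summable_nat_add_iff 1).2 this
  simpa using h2

lemma tendsto_Zs : Filter.Tendsto Zs atTop (nhds zeta2) :=
  summable_one_div_sq.hasSum.tendsto_sum_nat

lemma Hs_add (K m : ℕ) : Hs (K + m) = Hs K + ∑ i ∈ Finset.range m, 1 / ((K : ℝ) + i + 1) := by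
  unfold Hs
  rw [Finset.sum_range_add]
  congr 1
  refine Finset.sum_congr rfl fun i _ => ?_
  push_cast; ring_nf

lemma sum_shift (g : ℕ → ℝ) (m K : ℕ) :
    ∑ k ∈ Finset.range K, g (k + m) = ∑ k ∈ Finset.range (m + K), g k - ∑ k ∈ Finset.range m, g k := by
  rw [Finset.sum_range_add]
  simp [add_comm]

/-- harmonic-type base: partial sums of 1/(k+m+1) minus Hs K tend to -Hs m -/
lemma tendsto_harm (m : ℕ) :
    Filter.Tendsto (fun K => (∑ k ∈ Finset.range K, 1 / ((k : ℝ) + m + 1)) - Hs K)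
      atTop (nhds (-(Hs m))) := by
  have heq : ∀ K, (∑ k ∈ Finset.range K, 1 / ((k : ℝ) + m + 1)) - Hs K
      = (∑ i ∈ Finset.range m, 1 / ((K : ℝ) + i + 1)) - Hs m := by
    intro K
    have h1 : (∑ k ∈ Finset.range K, 1 / ((k : ℝ) + m + 1))
        = Hs (m + K) - Hs m := by
      unfold Hs
      rw [← sum_shift (fun k => 1 / ((k : ℝ) + 1)) m K]
      refine Finset.sum_congr rfl fun k _ => ?_
      push_cast; ring_nf
    rw [h1, add_comm m K, Hs_add]
    ring
  simp only [heq]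
  have : Filter.Tendsto (fun K : ℕ => (∑ i ∈ Finset.range m, 1 / ((K : ℝ) + i + 1))) atTop (nhds 0) := by
    have : Filter.Tendsto (fun K : ℕ => (∑ i ∈ Finset.range m, 1 / ((K : ℝ) + i + 1))) atTop
        (nhds (∑ i ∈ Finset.range m, (0:ℝ))) := by
      refine tendsto_finset_sum _ fun i _ => ?_
      have h : Filter.Tendsto (fun K : ℕ => ((K : ℝ) + i + 1)) atTop atTop := by
        apply tendsto_atTop_add_const_right
        apply tendsto_atTop_add_const_right
        exact tendsto_natCast_atTop_atTop
      simpa [Pi.inv_def] using h.inv_tendsto_atTop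
    simpa using this
  have := this.sub_const (Hs m)
  simpa using this

/-- zeta-type base -/
lemma tendsto_zeta_shift (m : ℕ) :
    Filter.Tendsto (fun K => (∑ k ∈ Finset.range K, 1 / ((k : ℝ) + m + 1) ^ 2))
      atTop (nhds (zeta2 - Zs m)) := by
  have heq : ∀ K, (∑ k ∈ Finset.range K, 1 / ((k : ℝ) + m + 1) ^ 2) = Zs (m + K) - Zs m := by
    intro K
    unfold Zs
    rw [← sum_shift (fun k => 1 / ((k : ℝ) + 1) ^ 2) m K]
    refine Finset.sum_congr rfl fun k _ => ?_
    push_cast; ring_nf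
  simp only [heq]
  have h1 : Filter.Tendsto (fun K => Zs (m + K)) atTop (nhds zeta2) :=
    tendsto_Zs.comp (tendsto_add_atTop_nat m |>.congr (fun n => by rw [add_comm]))
  simpa using h1.sub_const (Zs m)

/-- denominator product -/
noncomputable def Ds (s : Multiset ℕ) (k : ℕ) : ℝ := (s.map (fun j : ℕ => (k : ℝ) + (j : ℝ) + 1)).prod

lemma Ds_cons (a : ℕ) (t : Multiset ℕ) (k : ℕ) :
    Ds (a ::ₘ t) k = ((k : ℝ) + a + 1) * Ds t k := by
  simp [Ds]

lemma Ds_pos (s : Multiset ℕ) (k : ℕ) : 0 < Ds s k := by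
  induction s using Multiset.induction_on with
  | empty => simp [Ds]
  | cons a t ih =>
    rw [Ds_cons]
    have : (0:ℝ) < (k : ℝ) + a + 1 := by positivity
    exact mul_pos this ih

lemma Ds_erase {s : Multiset ℕ} {j : ℕ} (hj : j ∈ s) (k : ℕ) :
    Ds s k = ((k : ℝ) + j + 1) * Ds (s.erase j) k := by
  conv_lhs => rw [← Multiset.cons_erase hj]
  exact Ds_cons _ _ _

/-- Lemma A: constant numerator -/
lemma lemA : ∀ n : ℕ, ∀ s : Multiset ℕ, Multiset.card s = n → s ≠ 0 → (∀ j, s.count j ≤ 2) →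
    ∃ a b c : ℚ, Filter.Tendsto
      (fun K => (∑ k ∈ Finset.range K, 1 / Ds s k) - (c : ℝ) * Hs K)
      atTop (nhds ((a : ℝ) + (b : ℝ) * zeta2)) := by
  intro n
  induction n using Nat.strong_induction_on with
  | _ n IH =>
  intro s hcard hne hcount
  obtain ⟨j, hj⟩ := Multiset.exists_mem_of_ne_zero hne
  by_cases hd : ∃ l ∈ s, l ≠ j
  · -- two distinct poles
    obtain ⟨l, hl, hlj⟩ := hd
    have hln : n ≠ 0 := by
      rintro rfl; exact hne (Multiset.card_eq_zero.1 hcard)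
    have hcard1 : Multiset.card (s.erase j) = n - 1 := by
      rw [Multiset.card_erase_of_mem hj, hcard]; rfl
    have hcard2 : Multiset.card (s.erase l) = n - 1 := by
      rw [Multiset.card_erase_of_mem hl, hcard]; rfl
    have hne1 : s.erase j ≠ 0 := by
      intro h0
      have : l ∈ s.erase j := (Multiset.mem_erase_of_ne hlj).2 hl
      rw [h0] at this; exact absurd this (Multiset.notMem_zero l)
    have hne2 : s.erase l ≠ 0 := by
      intro h0
      have : j ∈ s.erase l := (Multiset.mem_erase_of_ne (Ne.symm hlj)).2 hj
      rw [h0] at this; exact absurd this (Multiset.notMem_zero j)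
    have hcnt1 : ∀ i, (s.erase j).count i ≤ 2 :=
      fun i => le_trans (Multiset.count_le_of_le i (Multiset.erase_le j s)) (hcount i)
    have hcnt2 : ∀ i, (s.erase l).count i ≤ 2 :=
      fun i => le_trans (Multiset.count_le_of_le i (Multiset.erase_le l s)) (hcount i)
    have hlt : n - 1 < n := Nat.sub_lt (Nat.pos_of_ne_zero hln) one_pos
    obtain ⟨a₁, b₁, c₁, T₁⟩ := IH (n-1) hlt (s.erase j) hcard1 hne1 hcnt1
    obtain ⟨a₂, b₂, c₂, T₂⟩ := IH (n-1) hlt (s.erase l) hcard2 hne2 hcnt2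
    -- 1/Ds s = q * (1/Ds (erase l) - 1/Ds (erase j)),  q = 1/(l - j)
    set q : ℚ := 1 / ((l : ℚ) - (j : ℚ)) with hq
    refine ⟨q * (a₂ - a₁), q * (b₂ - b₁), q * (c₂ - c₁), ?_⟩
    have hkey : ∀ k : ℕ, 1 / Ds s k
        = (q : ℝ) * (1 / Ds (s.erase l) k - 1 / Ds (s.erase j) k) := by
      intro k
      have hE : Ds (s.erase j) k = ((k : ℝ) + l + 1) * Ds ((s.erase j).erase l) k :=
        Ds_erase ((Multiset.mem_erase_of_ne hlj).2 hl) k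
      have hE2 : Ds (s.erase l) k = ((k : ℝ) + j + 1) * Ds ((s.erase j).erase l) k := by
        rw [Multiset.erase_comm]
        exact Ds_erase ((Multiset.mem_erase_of_ne (Ne.symm hlj)).2 hj) k
      have hS : Ds s k = ((k : ℝ) + j + 1) * (((k : ℝ) + l + 1) * Ds ((s.erase j).erase l) k) := by
        rw [Ds_erase hj k, hE]
      have hP := Ds_pos ((s.erase j).erase l) k
      have h1 : ((k : ℝ) + j + 1) ≠ 0 := by positivity
      have h2 : ((k : ℝ) + l + 1) ≠ 0 := by positivity
      have hlj' : (l : ℝ) - (j : ℝ) ≠ 0 := by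
        intro h
        apply hlj
        have : (l : ℝ) = j := by linarith
        exact_mod_cast this
      rw [hS, hE, hE2, hq]
      push_cast
      field_simp
      ring
    have heq : ∀ K, (∑ k ∈ Finset.range K, 1 / Ds s k) - ((q * (c₂ - c₁) : ℚ) : ℝ) * Hs K
        = (q : ℝ) * (((∑ k ∈ Finset.range K, 1 / Ds (s.erase l) k) - (c₂ : ℝ) * Hs K)
          - ((∑ k ∈ Finset.range K, 1 / Ds (s.erase j) k) - (c₁ : ℝ) * Hs K)) := by
      intro K
      rw [Finset.sum_congr rfl (fun k _ => hkey k)]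
      rw [← Finset.mul_sum, Finset.sum_sub_distrib]
      push_cast
      ring
    simp only [heq]
    have := ((T₂.sub T₁).const_mul (q : ℝ))
    convert this using 2
    push_cast
    ring
  · -- all elements equal j
    push_neg at hd
    have hall : ∀ x ∈ s, x = j := hd
    have hrepl : s = Multiset.replicate (Multiset.card s) j := Multiset.eq_replicate_card.2 hall
    have hcnt := hcount j
    have hcount_eq : s.count j = Multiset.card s := by
      rw [hrepl]; simp
    have hcards : Multiset.card s = n := hcard
    have hn1 : 1 ≤ n := by
      have : 0 < Multiset.card s := Multiset.card_pos.2 hne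
      omega
    have hn2 : n ≤ 2 := by omega
    interval_cases n
    · -- single pole
      have hs : s = {j} := by rw [hrepl, hcards]; rfl
      refine ⟨-(∑ k ∈ Finset.range j, (1 : ℚ) / ((k : ℚ) + 1)), 0, 1, ?_⟩
      have hD : ∀ k : ℕ, Ds s k = (k : ℝ) + j + 1 := by
        intro k; rw [hs]; simp [Ds]
      simp only [hD, Rat.cast_one, one_mul]
      have h2 : ((-(∑ k ∈ Finset.range j, (1 : ℚ) / ((k : ℚ) + 1)) : ℚ) : ℝ)
          + ((0 : ℚ) : ℝ) * zeta2 = -(Hs j) := by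
        rw [Hs]; push_cast; ring
      rw [h2]
      exact tendsto_harm j
    · -- double pole
      have hs : s = j ::ₘ {j} := by
        rw [hrepl, hcards]; rfl
      refine ⟨-(∑ k ∈ Finset.range j, (1 : ℚ) / ((k : ℚ) + 1) ^ 2), 1, 0, ?_⟩
      have hD : ∀ k : ℕ, Ds s k = ((k : ℝ) + j + 1) ^ 2 := by
        intro k; rw [hs, Ds_cons]; simp [Ds]; ring
      simp only [hD, Rat.cast_zero, zero_mul, sub_zero]
      have h2 : ((-(∑ k ∈ Finset.range j, (1 : ℚ) / ((k : ℚ) + 1) ^ 2) : ℚ) : ℝ)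
          + ((1 : ℚ) : ℝ) * zeta2 = zeta2 - Zs j := by
        rw [Zs]; push_cast; ring
      rw [h2]
      exact tendsto_zeta_shift j

open Polynomial Nat in
/-- Lemma B: polynomial numerator of degree < number of poles -/
lemma lemB : ∀ n : ℕ, ∀ s : Multiset ℕ, Multiset.card s = n → (∀ j, s.count j ≤ 2) →
    ∀ P : Polynomial ℚ, P.natDegree < n →
    ∃ a b c : ℚ, Filter.Tendsto
      (fun K => (∑ k ∈ Finset.range K, ((P.eval (k : ℚ) : ℚ) : ℝ) / Ds s k) - (c : ℝ) * Hs K)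
      atTop (nhds ((a : ℝ) + (b : ℝ) * zeta2)) := by
  intro n
  induction n using Nat.strong_induction_on with
  | _ n IH =>
  intro s hcard hcount P hdeg
  have hne : s ≠ 0 := by
    intro h0
    rw [h0] at hcard
    simp at hcard
    omega
  by_cases hP0 : P.natDegree = 0
  · -- constant case
    obtain ⟨r, rfl⟩ := Polynomial.natDegree_eq_zero.1 hP0
    obtain ⟨a, b, c, T⟩ := lemA n s hcard hne hcount
    refine ⟨r * a, r * b, r * c, ?_⟩
    have heq : ∀ K, (∑ k ∈ Finset.range K, (((Polynomial.C r).eval (k : ℚ) : ℚ) : ℝ) / Ds s k)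
        - ((r * c : ℚ) : ℝ) * Hs K
        = (r : ℝ) * ((∑ k ∈ Finset.range K, 1 / Ds s k) - (c : ℝ) * Hs K) := by
      intro K
      simp only [Polynomial.eval_C, mul_sub, Finset.mul_sum, mul_one_div]
      push_cast
      ring
    simp only [heq]
    have := T.const_mul (r : ℝ)
    convert this using 2
    push_cast
    ring
  · -- positive degree: divide by (X - C α), α = -(j+1)
    obtain ⟨j, hj⟩ := Multiset.exists_mem_of_ne_zero hne
    set α : ℚ := -((j : ℚ) + 1) with hα
    set Q := P /ₘ (X - C α) with hQ
    set r := P.eval α with hr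
    have hmonic : (X - C α).Monic := monic_X_sub_C α
    have hPeq : P = C r + (X - C α) * Q := by
      conv_lhs => rw [← Polynomial.modByMonic_add_div P (X - C α)]
      rw [Polynomial.modByMonic_X_sub_C_eq_C_eval]
    have hQdeg : Q.natDegree < n - 1 := by
      have h1 : Q.natDegree = P.natDegree - 1 := by
        rw [hQ, Polynomial.natDegree_divByMonic P hmonic, Polynomial.natDegree_X_sub_C]
      omega
    have hcard1 : Multiset.card (s.erase j) = n - 1 := by
      rw [Multiset.card_erase_of_mem hj, hcard]; rfl
    have hcnt1 : ∀ i, (s.erase j).count i ≤ 2 :=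
      fun i => le_trans (Multiset.count_le_of_le i (Multiset.erase_le j s)) (hcount i)
    have hn1 : 1 ≤ n := by omega
    obtain ⟨a₁, b₁, c₁, T₁⟩ := IH (n-1) (by omega) (s.erase j) hcard1 hcnt1 Q hQdeg
    obtain ⟨a₂, b₂, c₂, T₂⟩ := lemA n s hcard hne hcount
    refine ⟨a₁ + r * a₂, b₁ + r * b₂, c₁ + r * c₂, ?_⟩
    have hkey : ∀ k : ℕ, ((P.eval (k : ℚ) : ℚ) : ℝ) / Ds s k
        = ((Q.eval (k : ℚ) : ℚ) : ℝ) / Ds (s.erase j) k + (r : ℝ) * (1 / Ds s k) := by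
      intro k
      have hDs : Ds s k = ((k : ℝ) + j + 1) * Ds (s.erase j) k := Ds_erase hj k
      have hE := Ds_pos (s.erase j) k
      have h1 : ((k : ℝ) + j + 1) ≠ 0 := by positivity
      have hev : P.eval (k : ℚ) = r + ((k : ℚ) + j + 1) * Q.eval (k : ℚ) := by
        conv_lhs => rw [hPeq]
        simp only [Polynomial.eval_add, Polynomial.eval_C, Polynomial.eval_mul,
          Polynomial.eval_sub, Polynomial.eval_X, hα]
        ring
      rw [hev, hDs]
      push_cast
      field_simp
      ring
    have heq : ∀ K, (∑ k ∈ Finset.range K, ((P.eval (k : ℚ) : ℚ) : ℝ) / Ds s k)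
        - ((c₁ + r * c₂ : ℚ) : ℝ) * Hs K
        = ((∑ k ∈ Finset.range K, ((Q.eval (k : ℚ) : ℚ) : ℝ) / Ds (s.erase j) k) - (c₁ : ℝ) * Hs K)
          + (r : ℝ) * ((∑ k ∈ Finset.range K, 1 / Ds s k) - (c₂ : ℝ) * Hs K) := by
      intro K
      rw [Finset.sum_congr rfl (fun k _ => hkey k), Finset.sum_add_distrib, ← Finset.mul_sum]
      push_cast
      ring
    simp only [heq]
    have := T₁.add (T₂.const_mul (r : ℝ))
    convert this using 2
    push_cast
    ring

open Polynomial Nat in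
/-- Lemma C: the concrete sum is a ℚ-linear form in 1 and ζ(2). -/
lemma lemC (N : ℕ) (R : ℕ → ℝ) (hsum : Summable R)
    (hval : ∀ k : ℕ, R k = ((N ! : ℝ) * ∏ j ∈ Finset.range N, ((k : ℝ) + j + 1)) /
      (∏ j ∈ Finset.range (N + 1), ((k : ℝ) + (j + N) + 1)) ^ 2) :
    ∃ a b : ℚ, ∑' k, R k = (a : ℝ) + (b : ℝ) * zeta2 := by
  classical
  set t : Multiset ℕ := (Multiset.range (N + 1)).map (· + N) with ht
  set s : Multiset ℕ := t + t with hs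
  set P : Polynomial ℚ := C (N ! : ℚ) * ∏ j ∈ Finset.range N, (X + C ((j : ℚ) + 1)) with hP
  have hcard : Multiset.card s = 2 * (N + 1) := by
    simp [hs, ht, Multiset.card_map]
    ring
  have htnodup : t.Nodup := by
    apply Multiset.Nodup.map
    · intro a b hab
      simpa using hab
    · exact Multiset.nodup_range (N + 1)
  have hcount : ∀ j, s.count j ≤ 2 := by
    intro j
    have h1 : t.count j ≤ 1 := (Multiset.nodup_iff_count_le_one.1 htnodup) j
    rw [hs, Multiset.count_add]
    omega
  have hdeg : P.natDegree < 2 * (N + 1) := by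
    have h1 : P.natDegree ≤ 0 + N := by
      apply le_trans (Polynomial.natDegree_mul_le)
      gcongr
      · exact le_of_eq (Polynomial.natDegree_C _)
      · apply le_trans (Polynomial.natDegree_prod_le _ _)
        apply le_trans (Finset.sum_le_card_nsmul _ _ 1 ?_)
        · simp
        · intro j _
          exact le_of_eq (Polynomial.natDegree_X_add_C _)
    omega
  have hDs_t : ∀ k : ℕ, Ds t k = ∏ j ∈ Finset.range (N + 1), ((k : ℝ) + (j + N) + 1) := by
    intro k
    rw [Ds, ht, Multiset.map_map, Finset.prod_eq_multiset_prod, Finset.range_val]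
    apply congrArg
    apply Multiset.map_congr rfl
    intro j _
    simp
  have hDs_s : ∀ k : ℕ, Ds s k = (∏ j ∈ Finset.range (N + 1), ((k : ℝ) + (j + N) + 1)) ^ 2 := by
    intro k
    rw [hs]
    have : Ds (t + t) k = Ds t k * Ds t k := by simp [Ds]
    rw [this, hDs_t, sq]
  have hPev : ∀ k : ℕ, ((P.eval (k : ℚ) : ℚ) : ℝ)
      = (N ! : ℝ) * ∏ j ∈ Finset.range N, ((k : ℝ) + j + 1) := by
    intro k
    rw [hP]
    simp only [Polynomial.eval_mul, Polynomial.eval_C, Polynomial.eval_prod,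
      Polynomial.eval_add, Polynomial.eval_X]
    push_cast
    congr 1
    exact Finset.prod_congr rfl fun x _ => by ring
  have hRk : ∀ k : ℕ, R k = ((P.eval (k : ℚ) : ℚ) : ℝ) / Ds s k := by
    intro k
    rw [hval k, hPev k, hDs_s k]
  obtain ⟨a, b, c, T⟩ := lemB (2 * (N + 1)) s hcard hcount P hdeg
  have hT' : Filter.Tendsto (fun K => (∑ k ∈ Finset.range K, R k) - (c : ℝ) * Hs K)
      atTop (nhds ((a : ℝ) + (b : ℝ) * zeta2)) := by
    refine T.congr fun K => ?_
    congr 1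
    exact (Finset.sum_congr rfl fun k _ => (hRk k).symm)
  have hL : Filter.Tendsto (fun K => ∑ k ∈ Finset.range K, R k) atTop (nhds (∑' k, R k)) :=
    hsum.hasSum.tendsto_sum_nat
  have hc0 : c = 0 := by
    by_contra hc
    have h1 : Filter.Tendsto (fun K => (c : ℝ) * Hs K) atTop
        (nhds ((∑' k, R k) - ((a : ℝ) + (b : ℝ) * zeta2))) := by
      have := hL.sub hT'
      refine this.congr fun K => ?_
      ring
    have h2 : Filter.Tendsto Hs atTop
        (nhds (((∑' k, R k) - ((a : ℝ) + (b : ℝ) * zeta2)) / c)) := by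
      have := h1.div_const (c : ℝ)
      refine this.congr fun K => ?_
      field_simp
    have h3 : Filter.Tendsto Hs atTop atTop := by
      have := Real.tendsto_sum_range_one_div_nat_succ_atTop
      refine this.congr fun K => ?_
      simp [Hs]
    exact not_tendsto_atTop_of_tendsto_nhds h2 h3
  refine ⟨a, b, ?_⟩
  rw [hc0] at hT'
  simp only [Rat.cast_zero, zero_mul, sub_zero] at hT'
  exact tendsto_nhds_unique hL hT'

open Nat in
lemma prod_shift_factorial (k N : ℕ) : (∏ j ∈ Finset.range N, (k + j + 1)) * k ! = (k + N)! := by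
  induction N with
  | zero => simp
  | succ n ih =>
    rw [Finset.prod_range_succ, mul_right_comm, ih]
    rw [show k + (n + 1) = (k + n) + 1 from rfl, Nat.factorial_succ]
    ring

open Nat in
lemma choose_mul_eq_prod (k N : ℕ) :
    (k + N).choose N * N ! = ∏ j ∈ Finset.range N, (k + j + 1) := by
  have h1 := Nat.add_choose_mul_factorial_mul_factorial k N
  have h2 := prod_shift_factorial k N
  have hk : 0 < k ! := Nat.factorial_pos k
  apply Nat.eq_of_mul_eq_mul_right hk
  rw [h2, ← h1]
  ring

open Nat intervalIntegral in
lemma beta_nat (a b : ℕ) :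
    ∫ x in Set.Ioo (0:ℝ) 1, x ^ a * (1 - x) ^ b
      = (b ! : ℝ) / ∏ j ∈ Finset.range (b + 1), ((a : ℝ) + 1 + j) := by
  have hre : 0 < Complex.re ((a : ℂ) + 1) := by
    simp only [Complex.add_re, Complex.natCast_re, Complex.one_re]
    positivity
  have hβ := Complex.betaIntegral_eval_nat_add_one_right hre b
  rw [Complex.betaIntegral] at hβ
  have hint : (∫ x in (0:ℝ)..1, (x : ℂ) ^ (((a : ℂ) + 1) - 1) * ((1 : ℂ) - x) ^ (((b : ℂ) + 1) - 1))
      = ((∫ x in (0:ℝ)..1, x ^ a * (1 - x) ^ b : ℝ) : ℂ) := by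
    rw [← intervalIntegral.integral_ofReal]
    refine intervalIntegral.integral_congr fun x _ => ?_
    rw [show ((a : ℂ) + 1) - 1 = ((a : ℕ) : ℂ) by ring, show ((b : ℂ) + 1) - 1 = ((b : ℕ) : ℂ) by ring,
      Complex.cpow_natCast, Complex.cpow_natCast]
    push_cast
    ring
  rw [hint] at hβ
  have h0 : ∫ x in Set.Ioo (0:ℝ) 1, x ^ a * (1 - x) ^ b = ∫ x in (0:ℝ)..1, x ^ a * (1 - x) ^ b := by
    rw [intervalIntegral.integral_of_le zero_le_one, MeasureTheory.integral_Ioc_eq_integral_Ioo]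
  rw [h0]
  apply Complex.ofReal_inj.1
  rw [hβ]
  push_cast
  ring

open Nat Set in
theorem stmt15 (N : ℕ) :
    ∃ aN bN : ℚ,
      IntegrableOn (fun p : ℝ × ℝ =>
          (p.1 * p.2 * (1 - p.1) * (1 - p.2) / (1 - p.1 * p.2)) ^ N * (1 / (1 - p.1 * p.2)))
        (Set.Ioo (0:ℝ) 1 ×ˢ Set.Ioo (0:ℝ) 1) ∧
      (∫ p in Set.Ioo (0:ℝ) 1 ×ˢ Set.Ioo (0:ℝ) 1,
          (p.1 * p.2 * (1 - p.1) * (1 - p.2) / (1 - p.1 * p.2)) ^ N * (1 / (1 - p.1 * p.2))) =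
        (aN : ℝ) + (bN : ℝ) * zeta2 := by
  classical
  set f : ℝ × ℝ → ℝ := fun p =>
    (p.1 * p.2 * (1 - p.1) * (1 - p.2) / (1 - p.1 * p.2)) ^ N * (1 / (1 - p.1 * p.2)) with hf
  set S : Set (ℝ × ℝ) := Set.Ioo (0:ℝ) 1 ×ˢ Set.Ioo (0:ℝ) 1 with hSdef
  have hS : MeasurableSet S := (measurableSet_Ioo.prod measurableSet_Ioo)
  set ph : ℕ → ℝ → ℝ := fun k x => x ^ (N + k) * (1 - x) ^ N with hph
  set F : ℕ → ℝ × ℝ → ℝ := fun k p => (((k + N).choose N : ℝ) * ph k p.1) * ph k p.2 with hF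
  set B : ℕ → ℝ := fun k => (N ! : ℝ) / ∏ j ∈ Finset.range (N + 1), (((N + k : ℕ) : ℝ) + 1 + j)
    with hB
  set R : ℕ → ℝ := fun k => ((k + N).choose N : ℝ) * B k * B k with hR
  -- basic positivity facts
  have hne : ∀ p ∈ S, (1 : ℝ) - p.1 * p.2 ≠ 0 := by
    rintro ⟨x, y⟩ ⟨⟨hx0, hx1⟩, ⟨hy0, hy1⟩⟩
    have : x * y < 1 := by nlinarith
    simp only []
    linarith
  have hphc : ∀ k, Continuous (ph k) := by
    intro k
    fun_prop
  have hphint : ∀ k, IntegrableOn (ph k) (Set.Ioo (0:ℝ) 1) := fun k =>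
    ((hphc k).integrableOn_Icc).mono_set Set.Ioo_subset_Icc_self
  have hphval : ∀ k, ∫ x in Set.Ioo (0:ℝ) 1, ph k x = B k := by
    intro k
    have := beta_nat (N + k) N
    rw [hph, hB]
    simpa using this
  have hFc : ∀ k, Continuous (F k) := by
    intro k
    exact (continuous_const.mul ((hphc k).comp continuous_fst)).mul
      ((hphc k).comp continuous_snd)
  have hFint : ∀ k, IntegrableOn (F k) S := by
    intro k
    rw [IntegrableOn, hSdef, MeasureTheory.Measure.volume_eq_prod, ← Measure.prod_restrict]
    exact ((hphint k).const_mul _).mul_prod (hphint k)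
  have hFval : ∀ k, ∫ p in S, F k p = R k := by
    intro k
    rw [hSdef, MeasureTheory.Measure.volume_eq_prod, hF]
    rw [MeasureTheory.setIntegral_prod_mul (fun x => ((k + N).choose N : ℝ) * ph k x) (ph k)]
    rw [MeasureTheory.integral_const_mul, hphval k, hR]
  have hFnn : ∀ k, ∀ p ∈ S, 0 ≤ F k p := by
    rintro k ⟨x, y⟩ ⟨⟨hx0, hx1⟩, ⟨hy0, hy1⟩⟩
    have h1 : (0:ℝ) ≤ x ^ (N + k) * (1 - x) ^ N :=
      mul_nonneg (pow_nonneg hx0.le _) (pow_nonneg (by linarith) _)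
    have h2 : (0:ℝ) ≤ y ^ (N + k) * (1 - y) ^ N :=
      mul_nonneg (pow_nonneg hy0.le _) (pow_nonneg (by linarith) _)
    have h3 : (0:ℝ) ≤ ((k + N).choose N : ℝ) := Nat.cast_nonneg _
    exact mul_nonneg (mul_nonneg h3 h1) h2
  have hHasSum : ∀ p ∈ S, HasSum (fun k => F k p) (f p) := by
    rintro ⟨x, y⟩ hp
    obtain ⟨⟨hx0, hx1⟩, ⟨hy0, hy1⟩⟩ := hp
    have hrlt : ‖x * y‖ < 1 := by
      rw [Real.norm_eq_abs, abs_of_nonneg (by positivity)]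
      nlinarith
    have h := hasSum_choose_mul_geometric_of_norm_lt_one (𝕜 := ℝ) N hrlt
    have h2 := h.mul_right ((x * (1 - x) * (y * (1 - y))) ^ N)
    have h1mxy : (1 : ℝ) - x * y ≠ 0 := hne ⟨x, y⟩ ⟨⟨hx0, hx1⟩, ⟨hy0, hy1⟩⟩
    convert h2 using 1
    · rfl
    · funext k
      show (((k + N).choose N : ℝ) * (x ^ (N + k) * (1 - x) ^ N)) * (y ^ (N + k) * (1 - y) ^ N)
        = ((k + N).choose N : ℝ) * (x * y) ^ k * (x * (1 - x) * (y * (1 - y))) ^ N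
      rw [show x * (1 - x) * (y * (1 - y)) = (x * (1 - x)) * (y * (1 - y)) from rfl,
        mul_pow (x * (1 - x)) (y * (1 - y)) N, mul_pow x (1 - x) N, mul_pow y (1 - y) N,
        mul_pow x y k, pow_add x N k, pow_add y N k]
      ring
    · show (x * y * (1 - x) * (1 - y) / (1 - x * y)) ^ N * (1 / (1 - x * y))
        = 1 / (1 - x * y) ^ (N + 1) * (x * (1 - x) * (y * (1 - y))) ^ N
      rw [div_pow]
      field_simp
      ring
  have hfc : ContinuousOn f S := by
    apply ContinuousOn.mul
    · apply ContinuousOn.pow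
      apply ContinuousOn.div
      · fun_prop
      · fun_prop
      · exact hne
    · apply ContinuousOn.div
      · fun_prop
      · fun_prop
      · exact hne
  have hmeasf : AEStronglyMeasurable f (volume.restrict S) := hfc.aestronglyMeasurable hS
  have hfnn : ∀ p ∈ S, 0 ≤ f p := by
    intro p hp
    exact ((hHasSum p hp).nonneg (fun k => hFnn k p hp))
  have hfnn_ae : 0 ≤ᵐ[volume.restrict S] f :=
    (ae_restrict_iff' hS).2 (Filter.Eventually.of_forall hfnn)
  -- identification of R with the rational-function form
  have hRval : ∀ k : ℕ, R k = ((N ! : ℝ) * ∏ j ∈ Finset.range N, ((k : ℝ) + j + 1)) /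
      (∏ j ∈ Finset.range (N + 1), ((k : ℝ) + (j + N) + 1)) ^ 2 := by
    intro k
    have hQ : (∏ j ∈ Finset.range (N + 1), (((N + k : ℕ) : ℝ) + 1 + j))
        = ∏ j ∈ Finset.range (N + 1), ((k : ℝ) + (j + N) + 1) := by
      refine Finset.prod_congr rfl fun j _ => ?_
      push_cast
      ring
    have hQpos : 0 < ∏ j ∈ Finset.range (N + 1), ((k : ℝ) + (j + N) + 1) := by
      apply Finset.prod_pos
      intro j _
      positivity
    have hc : (∏ j ∈ Finset.range N, ((k : ℝ) + j + 1))
        = ((k + N).choose N : ℝ) * (N ! : ℝ) := by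
      have h := congrArg (Nat.cast : ℕ → ℝ) (choose_mul_eq_prod k N)
      push_cast at h
      linarith
    simp only [hR, hB]
    rw [hQ, hc]
    field_simp
  have hRnn : ∀ k, 0 ≤ R k := by
    intro k
    rw [hRval k]
    have h1 : (0:ℝ) ≤ (N ! : ℝ) * ∏ j ∈ Finset.range N, ((k : ℝ) + j + 1) := by
      apply mul_nonneg (Nat.cast_nonneg _)
      apply Finset.prod_nonneg
      intro j _
      positivity
    have h2 : (0:ℝ) ≤ (∏ j ∈ Finset.range (N + 1), ((k : ℝ) + (j + N) + 1)) ^ 2 := sq_nonneg _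
    positivity
  have hsumR : Summable R := by
    refine Summable.of_nonneg_of_le hRnn (fun k => ?_) (summable_one_div_sq.mul_left (N ! : ℝ))
    rw [hRval k, Finset.prod_range_succ]
    set A := ∏ j ∈ Finset.range N, ((k : ℝ) + (j + N) + 1) with hA
    set c := (k : ℝ) + ((N : ℝ) + (N : ℝ)) + 1 with hc
    have hApos : 0 < A := by
      rw [hA]
      apply Finset.prod_pos
      intro j _
      positivity
    have hA1 : 1 ≤ A := by
      rw [hA]
      refine le_trans (by norm_num) (Finset.prod_le_prod (f := fun _ => (1:ℝ))
        (fun j _ => by norm_num) (fun j hj => ?_))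
      have h1 : (0:ℝ) ≤ (k : ℝ) := Nat.cast_nonneg k
      have h2 : (0:ℝ) ≤ (j : ℝ) := Nat.cast_nonneg j
      have h3 : (0:ℝ) ≤ (N : ℝ) := Nat.cast_nonneg N
      push_cast
      linarith
    have hPA : (∏ j ∈ Finset.range N, ((k : ℝ) + j + 1)) ≤ A := by
      rw [hA]
      apply Finset.prod_le_prod
      · intro j _; positivity
      · intro j _
        have h3 : (0:ℝ) ≤ (N : ℝ) := Nat.cast_nonneg N
        push_cast
        linarith
    have hcpos : (0:ℝ) < c := by rw [hc]; positivity
    have hck : ((k : ℝ) + 1) ≤ c := by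
      rw [hc]
      have h3 : (0:ℝ) ≤ (N : ℝ) := Nat.cast_nonneg N
      linarith
    have hden : (0:ℝ) < (A * c) ^ 2 := by positivity
    have h1 : ((N ! : ℝ) * (∏ j ∈ Finset.range N, ((k:ℝ) + j + 1))) / (A * c) ^ 2
        ≤ ((N ! : ℝ) * A) / (A * c) ^ 2 := by
      gcongr
    have h2 : ((N ! : ℝ) * A) / (A * c) ^ 2 = (N ! : ℝ) / (A * c ^ 2) := by
      field_simp
    have h3 : (N ! : ℝ) / (A * c ^ 2) ≤ (N ! : ℝ) / (1 * ((k:ℝ) + 1) ^ 2) := by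
      gcongr <;> first | positivity | exact hA1 | exact hck
    have h4 : (N ! : ℝ) / (1 * ((k:ℝ) + 1) ^ 2) = (N ! : ℝ) * (1 / ((k:ℝ) + 1) ^ 2) := by
      ring
    linarith
  have hket : ∀ k : ℕ, (∫⁻ p in S, ENNReal.ofReal (F k p)) = ENNReal.ofReal (R k) := by
    intro k
    rw [← MeasureTheory.ofReal_integral_eq_lintegral_ofReal (hFint k)
      ((ae_restrict_iff' hS).2 (Filter.Eventually.of_forall (hFnn k))), hFval k]
  have hflint : (∫⁻ p in S, ENNReal.ofReal (f p)) = ∑' k, ENNReal.ofReal (R k) := by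
    have step1 : ∀ᵐ p ∂(volume.restrict S), ENNReal.ofReal (f p) = ∑' k, ENNReal.ofReal (F k p) := by
      refine (ae_restrict_iff' hS).2 (Filter.Eventually.of_forall fun p hp => ?_)
      rw [← (hHasSum p hp).tsum_eq,
        ENNReal.ofReal_tsum_of_nonneg (fun k => hFnn k p hp) (hHasSum p hp).summable]
    rw [lintegral_congr_ae step1,
      lintegral_tsum (fun k => ((hFc k).measurable.ennreal_ofReal.aemeasurable))]
    exact tsum_congr hket
  have hofReal_sum : (∑' k, ENNReal.ofReal (R k)) = ENNReal.ofReal (∑' k, R k) :=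
    (ENNReal.ofReal_tsum_of_nonneg hRnn hsumR).symm
  have hint_f : IntegrableOn f S := by
    refine ⟨hmeasf, ?_⟩
    rw [MeasureTheory.hasFiniteIntegral_iff_ofReal hfnn_ae, hflint, hofReal_sum]
    exact ENNReal.ofReal_lt_top
  have hval_int : (∫ p in S, f p) = ∑' k, R k := by
    have e1 : (∫ p in S, f p) = ∫ p in S, ∑' k, F k p := by
      apply MeasureTheory.integral_congr_ae
      exact (ae_restrict_iff' hS).2
        (Filter.Eventually.of_forall fun p hp => ((hHasSum p hp).tsum_eq).symm)
    have hnorm : ∀ k, (∫⁻ p in S, ‖F k p‖ₑ) = ENNReal.ofReal (R k) := by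
      intro k
      rw [← hket k]
      apply lintegral_congr_ae
      refine (ae_restrict_iff' hS).2 (Filter.Eventually.of_forall fun p hp => ?_)
      exact Real.enorm_eq_ofReal (hFnn k p hp)
    rw [e1, MeasureTheory.integral_tsum (fun k => ((hFc k).aestronglyMeasurable).restrict) ?_]
    · exact tsum_congr hFval
    · rw [tsum_congr hnorm, hofReal_sum]
      exact ENNReal.ofReal_ne_top
  obtain ⟨a, b, hab⟩ := lemC N R hsumR hRval
  exact ⟨a, b, hint_f, by rw [hval_int, hab]⟩
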